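/- Let Λ > 0. There exists a function w : ℝ → ℝ of class C⁴, not identically zero on [0,π], satisfying w''''(y) = −Λ w''(y) for all y ∈ (0,π) together with the boundary conditions w(0) = w(π) = 0 and w'(0) = w'(π) = 0, if and only if 2(cos(√Λ π) − 1) + √Λ π sin(√Λ π) = 0. -/

import Mathlib

open Real

noncomputable def trigf (A B C D μ : ℝ) : ℝ → ℝ :=
  fun y => A + B * y + C * Real.cos (μ * y) + D * Real.sin (μ * y)

lemma hasDerivAt_mulcos (μ y : ℝ) :
    HasDerivAt (fun y : ℝ => Real.cos (μ * y)) (-(μ * Real.sin (μ * y))) y := by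
  have h := (Real.hasDerivAt_cos (μ * y)).comp y ((hasDerivAt_id y).const_mul μ)
  exact h.congr_deriv (by ring)

lemma hasDerivAt_mulsin (μ y : ℝ) :
    HasDerivAt (fun y : ℝ => Real.sin (μ * y)) (μ * Real.cos (μ * y)) y := by
  have h := (Real.hasDerivAt_sin (μ * y)).comp y ((hasDerivAt_id y).const_mul μ)
  exact h.congr_deriv (by ring)

lemma trigf_hasDerivAt (A B C D μ y : ℝ) :
    HasDerivAt (trigf A B C D μ) (trigf B 0 (μ*D) (-(μ*C)) μ y) y := by
  have h : HasDerivAt (trigf A B C D μ)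
      (0 + B * 1 + C * (-(μ * Real.sin (μ*y))) + D * (μ * Real.cos (μ*y))) y :=
    (((hasDerivAt_const y A).add ((hasDerivAt_id y).const_mul B)).add
      ((hasDerivAt_mulcos μ y).const_mul C)).add ((hasDerivAt_mulsin μ y).const_mul D)
  convert h using 1
  simp [trigf]; ring

lemma trigf_deriv (A B C D μ : ℝ) :
    deriv (trigf A B C D μ) = trigf B 0 (μ*D) (-(μ*C)) μ :=
  funext fun y => (trigf_hasDerivAt A B C D μ y).deriv

lemma trigf_deriv2 (A B C D μ : ℝ) :
    deriv^[2] (trigf A B C D μ) = trigf 0 0 (-(μ^2*C)) (-(μ^2*D)) μ := by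
  show deriv (deriv (trigf A B C D μ)) = _
  rw [trigf_deriv, trigf_deriv]
  funext y; simp [trigf]; ring

lemma trigf_deriv3 (A B C D μ : ℝ) :
    deriv^[3] (trigf A B C D μ) = trigf 0 0 (-(μ^3*D)) (μ^3*C) μ := by
  show deriv (deriv (deriv (trigf A B C D μ))) = _
  rw [trigf_deriv, trigf_deriv, trigf_deriv]
  funext y; simp [trigf]; ring

lemma trigf_deriv4 (A B C D μ : ℝ) :
    deriv^[4] (trigf A B C D μ) = trigf 0 0 (μ^4*C) (μ^4*D) μ := by
  show deriv (deriv (deriv (deriv (trigf A B C D μ)))) = _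
  rw [trigf_deriv, trigf_deriv, trigf_deriv, trigf_deriv]
  funext y; simp [trigf]; ring

lemma trigf_contDiff (A B C D μ : ℝ) : ContDiff ℝ 4 (trigf A B C D μ) := by
  unfold trigf
  exact ((contDiff_const.add (contDiff_const.mul contDiff_id)).add
    (contDiff_const.mul (Real.contDiff_cos.comp (contDiff_const.mul contDiff_id)))).add
    (contDiff_const.mul (Real.contDiff_sin.comp (contDiff_const.mul contDiff_id)))

lemma eq_of_hasDerivAt_zero {f : ℝ → ℝ} {a b : ℝ} (hab : a < b) (hc : Continuous f)
    (hd : ∀ y ∈ Set.Ioo a b, HasDerivAt f 0 y) {u v : ℝ}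
    (hu : u ∈ Set.Icc a b) (hv : v ∈ Set.Icc a b) : f u = f v := by
  have hm : (a+b)/2 ∈ Set.Ioo a b := ⟨by linarith, by linarith⟩
  have key : ∀ p q : ℝ, p ∈ Set.Ioo a b → q ∈ Set.Ioo a b → p ≤ q → f q = f p := by
    intro p q hp hq hpq
    exact constant_of_has_deriv_right_zero (hc.continuousOn)
      (fun x hx => (hd x ⟨lt_of_lt_of_le hp.1 hx.1, lt_trans hx.2 hq.2⟩).hasDerivWithinAt)
      q ⟨hpq, le_refl q⟩
  have hIoo : ∀ y ∈ Set.Ioo a b, f y = f ((a+b)/2) := by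
    intro y hy
    rcases le_total y ((a+b)/2) with h | h
    · exact (key y ((a+b)/2) hy hm h).symm
    · exact key ((a+b)/2) y hm hy h
  have hsub : Set.Icc a b ⊆ {z | f z = f ((a+b)/2)} := by
    rw [← closure_Ioo hab.ne]
    exact closure_minimal hIoo (isClosed_eq hc continuous_const)
  exact (hsub hu).trans (hsub hv).symm

lemma ode_rep {w : ℝ → ℝ} {μ : ℝ} (hμ : 0 < μ) (hw : ContDiff ℝ 4 w)
    (hode : ∀ y ∈ Set.Ioo (0:ℝ) π, deriv^[4] w y = -(μ^2) * deriv^[2] w y) :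
    ∃ A B C D : ℝ, (∀ y ∈ Set.Icc (0:ℝ) π, w y = trigf A B C D μ y) ∧
      (∀ y ∈ Set.Icc (0:ℝ) π, deriv w y = trigf B 0 (μ*D) (-(μ*C)) μ y) := by
  have hπ := Real.pi_pos
  have hμ0 : μ ≠ 0 := hμ.ne'
  set g : ℝ → ℝ := deriv (deriv w) with hgdef
  have hw31 : ContDiff ℝ ((3+1 : ℕ) : ℕ∞) w := by exact_mod_cast hw
  have hw22 : ContDiff ℝ ((2+2 : ℕ) : ℕ∞) w := by exact_mod_cast hw
  have hw13 : ContDiff ℝ ((1+3 : ℕ) : ℕ∞) w := by exact_mod_cast hw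
  have hw3 : ContDiff ℝ (3:ℕ) (deriv w) := hw31.iterate_deriv' 3 1
  have hgC : ContDiff ℝ (2:ℕ) g := hw22.iterate_deriv' 2 2
  have hg3 : ContDiff ℝ (1:ℕ) (deriv g) := hw13.iterate_deriv' 1 3
  have hcw' : Continuous (deriv w) := hw3.continuous
  have hcg : Continuous g := hgC.continuous
  have hcg' : Continuous (deriv g) := hg3.continuous
  have hdw : ∀ y, HasDerivAt w (deriv w y) y :=
    fun y => ((hw.differentiable (by norm_num)) y).hasDerivAt
  have hdw' : ∀ y, HasDerivAt (deriv w) (g y) y :=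
    fun y => ((hw3.differentiable (by norm_num)) y).hasDerivAt
  have hdg : ∀ y, HasDerivAt g (deriv g y) y :=
    fun y => ((hgC.differentiable (by norm_num)) y).hasDerivAt
  have hdg' : ∀ y ∈ Set.Ioo (0:ℝ) π, HasDerivAt (deriv g) (-(μ^2) * g y) y := by
    intro y hy
    have h := ((hg3.differentiable (by norm_num)) y).hasDerivAt
    rwa [show deriv (deriv g) y = deriv^[4] w y from rfl, hode y hy] at h
  have hFG : ∀ y ∈ Set.Icc (0:ℝ) π,
      μ * g y * Real.cos (μ*y) - deriv g y * Real.sin (μ*y)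
        = μ * g 0 * Real.cos (μ*0) - deriv g 0 * Real.sin (μ*0) := by
    intro y hy
    refine eq_of_hasDerivAt_zero (f := fun y => μ * g y * Real.cos (μ*y) - deriv g y * Real.sin (μ*y)) hπ ?_ ?_ hy ⟨le_refl 0, hπ.le⟩
    · exact ((continuous_const.mul hcg).mul
        (Real.continuous_cos.comp (continuous_const.mul continuous_id))).sub
        (hcg'.mul (Real.continuous_sin.comp (continuous_const.mul continuous_id)))
    · intro z hz
      have h := (((hdg z).const_mul μ).mul (hasDerivAt_mulcos μ z)).sub
        ((hdg' z hz).mul (hasDerivAt_mulsin μ z))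
      exact h.congr_deriv (by ring)
  have hGG : ∀ y ∈ Set.Icc (0:ℝ) π,
      -(μ * g y * Real.sin (μ*y)) - deriv g y * Real.cos (μ*y)
        = -(μ * g 0 * Real.sin (μ*0)) - deriv g 0 * Real.cos (μ*0) := by
    intro y hy
    refine eq_of_hasDerivAt_zero (f := fun y => -(μ * g y * Real.sin (μ*y)) - deriv g y * Real.cos (μ*y)) hπ ?_ ?_ hy ⟨le_refl 0, hπ.le⟩
    · exact (((continuous_const.mul hcg).mul
        (Real.continuous_sin.comp (continuous_const.mul continuous_id))).neg).sub
        (hcg'.mul (Real.continuous_cos.comp (continuous_const.mul continuous_id)))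
    · intro z hz
      have h := ((((hdg z).const_mul μ).mul (hasDerivAt_mulsin μ z)).neg).sub
        ((hdg' z hz).mul (hasDerivAt_mulcos μ z))
      exact h.congr_deriv (by ring)
  obtain ⟨α, hFG⟩ : ∃ α, ∀ y ∈ Set.Icc (0:ℝ) π,
      μ * g y * Real.cos (μ*y) - deriv g y * Real.sin (μ*y) = α := ⟨_, hFG⟩
  obtain ⟨β, hGG⟩ : ∃ β, ∀ y ∈ Set.Icc (0:ℝ) π,
      -(μ * g y * Real.sin (μ*y)) - deriv g y * Real.cos (μ*y) = β := ⟨_, hGG⟩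
  have hgform : ∀ y ∈ Set.Icc (0:ℝ) π, μ * g y = α * Real.cos (μ*y) - β * Real.sin (μ*y) := by
    intro y hy
    have h1 := hFG y hy
    have h2 := hGG y hy
    have p := Real.sin_sq_add_cos_sq (μ*y)
    linear_combination Real.cos (μ*y) * h1 - Real.sin (μ*y) * h2 - μ * g y * p
  have hBconst : ∀ y ∈ Set.Icc (0:ℝ) π,
      deriv w y - (α * Real.sin (μ*y) + β * Real.cos (μ*y))/μ^2
        = deriv w 0 - (α * Real.sin (μ*0) + β * Real.cos (μ*0))/μ^2 := by
    intro y hy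
    refine eq_of_hasDerivAt_zero (f := fun y => deriv w y - (α * Real.sin (μ*y) + β * Real.cos (μ*y))/μ^2) hπ ?_ ?_ hy ⟨le_refl 0, hπ.le⟩
    · exact hcw'.sub ((((continuous_const.mul (Real.continuous_sin.comp (continuous_const.mul continuous_id))).add
        (continuous_const.mul (Real.continuous_cos.comp (continuous_const.mul continuous_id)))).div_const (μ^2)))
    · intro z hz
      have h := (hdw' z).sub ((((hasDerivAt_mulsin μ z).const_mul α).add
        ((hasDerivAt_mulcos μ z).const_mul β)).div_const (μ^2))
      have hz' : g z - (α * (μ * Real.cos (μ*z)) + β * (-(μ * Real.sin (μ*z))))/μ^2 = 0 := by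
        have hg := hgform z ⟨hz.1.le, hz.2.le⟩
        field_simp
        linear_combination hg
      rwa [hz'] at h
  obtain ⟨B, hBconst⟩ : ∃ B, ∀ y ∈ Set.Icc (0:ℝ) π,
      deriv w y - (α * Real.sin (μ*y) + β * Real.cos (μ*y))/μ^2 = B := ⟨_, hBconst⟩
  have hAconst : ∀ y ∈ Set.Icc (0:ℝ) π,
      w y - ((-α) * Real.cos (μ*y) + β * Real.sin (μ*y))/μ^3 - B*y
        = w 0 - ((-α) * Real.cos (μ*0) + β * Real.sin (μ*0))/μ^3 - B*0 := by
    intro y hy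
    refine eq_of_hasDerivAt_zero (f := fun y => w y - ((-α) * Real.cos (μ*y) + β * Real.sin (μ*y))/μ^3 - B*y) hπ ?_ ?_ hy ⟨le_refl 0, hπ.le⟩
    · exact ((hw.continuous).sub ((((continuous_const.mul (Real.continuous_cos.comp (continuous_const.mul continuous_id))).add
        (continuous_const.mul (Real.continuous_sin.comp (continuous_const.mul continuous_id)))).div_const (μ^3)))).sub
        (continuous_const.mul continuous_id)
    · intro z hz
      have h := ((hdw z).sub ((((hasDerivAt_mulcos μ z).const_mul (-α)).add
        ((hasDerivAt_mulsin μ z).const_mul β)).div_const (μ^3))).sub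
        ((hasDerivAt_id z).const_mul B)
      have hz' : deriv w z - ((-α) * (-(μ * Real.sin (μ*z))) + β * (μ * Real.cos (μ*z)))/μ^3 - B*1 = 0 := by
        have hb := hBconst z ⟨hz.1.le, hz.2.le⟩
        field_simp at hb ⊢
        linear_combination hb
      rwa [hz'] at h
  obtain ⟨A, hAconst⟩ : ∃ A, ∀ y ∈ Set.Icc (0:ℝ) π,
      w y - ((-α) * Real.cos (μ*y) + β * Real.sin (μ*y))/μ^3 - B*y = A := ⟨_, hAconst⟩
  refine ⟨A, B, -(α/μ^3), β/μ^3, ?_, ?_⟩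
  · intro y hy
    have h := hAconst y hy
    show w y = A + B * y + (-(α/μ^3)) * Real.cos (μ*y) + (β/μ^3) * Real.sin (μ*y)
    linear_combination h
  · intro y hy
    have h := hBconst y hy
    show deriv w y = B + 0 * y + (μ*(β/μ^3)) * Real.cos (μ*y) + (-(μ*(-(α/μ^3)))) * Real.sin (μ*y)
    field_simp at h ⊢
    linear_combination h

/-- For `Λ > 0`, there exists a `C⁴` function `w : ℝ → ℝ`, not identically zero on `[0,π]`,
with `w'''' = −Λ w''` on `(0,π)` and `w(0) = w(π) = w'(0) = w'(π) = 0`, if and only if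
`2(cos(√Λ π) − 1) + √Λ π sin(√Λ π) = 0`. -/
theorem clamped_ode_solvability (Λ : ℝ) (hΛ : 0 < Λ) :
    (∃ w : ℝ → ℝ, ContDiff ℝ 4 w ∧ (∃ y ∈ Set.Icc (0 : ℝ) π, w y ≠ 0) ∧
      (∀ y ∈ Set.Ioo (0 : ℝ) π, deriv^[4] w y = -Λ * deriv^[2] w y) ∧
      w 0 = 0 ∧ w π = 0 ∧ deriv w 0 = 0 ∧ deriv w π = 0) ↔
    2 * (Real.cos (Real.sqrt Λ * π) - 1) +
        Real.sqrt Λ * π * Real.sin (Real.sqrt Λ * π) = 0 := by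
  have hπ := Real.pi_pos
  set μ := Real.sqrt Λ with hμdef
  have hμ : 0 < μ := Real.sqrt_pos.mpr hΛ
  have hμ0 : μ ≠ 0 := hμ.ne'
  have hμ2 : μ^2 = Λ := Real.sq_sqrt hΛ.le
  constructor
  · rintro ⟨w, hw, ⟨y0, hy0, hwy0⟩, hode, h0, hπv, hd0, hdπ⟩
    by_contra hΔ
    apply hwy0
    have hode' : ∀ y ∈ Set.Ioo (0:ℝ) π, deriv^[4] w y = -(μ^2) * deriv^[2] w y := by
      intro y hy; rw [hμ2]; exact hode y hy
    obtain ⟨A, B, C, D, hrw, hrd⟩ := ode_rep hμ hw hode'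
    have mem0 : (0:ℝ) ∈ Set.Icc (0:ℝ) π := ⟨le_refl _, hπ.le⟩
    have memπ : π ∈ Set.Icc (0:ℝ) π := ⟨hπ.le, le_refl _⟩
    have E1 : A + C = 0 := by
      have h := (hrw 0 mem0).symm.trans h0
      simp only [trigf, mul_zero, Real.cos_zero, Real.sin_zero, mul_one, add_zero] at h
      linarith
    have E2 : B + μ*D = 0 := by
      have h := (hrd 0 mem0).symm.trans hd0
      simp only [trigf, mul_zero, zero_mul, Real.cos_zero, Real.sin_zero, mul_one, add_zero] at h
      linarith
    have E3 : A + B*π + C*Real.cos (μ*π) + D*Real.sin (μ*π) = 0 :=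
      (hrw π memπ).symm.trans hπv
    have E4 : B + 0*π + μ*D*Real.cos (μ*π) + (-(μ*C))*Real.sin (μ*π) = 0 :=
      (hrd π memπ).symm.trans hdπ
    have p := Real.sin_sq_add_cos_sq (μ*π)
    have hΔ' : 2 - 2*Real.cos (μ*π) - μ*π*Real.sin (μ*π) ≠ 0 := fun h => hΔ (by linarith)
    have hD : D = 0 := by
      have key : μ * D * (2 - 2*Real.cos (μ*π) - μ*π*Real.sin (μ*π)) = 0 := by
        linear_combination μ*Real.sin (μ*π)*E3 - μ*Real.sin (μ*π)*E1 - μ*Real.sin (μ*π)*π*E2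
          + (Real.cos (μ*π) - 1)*E4 - (Real.cos (μ*π) - 1)*E2 - μ*D*p
      rcases mul_eq_zero.mp key with h | h
      · rcases mul_eq_zero.mp h with h' | h'
        · exact absurd h' hμ0
        · exact h'
      · exact absurd h hΔ'
    have hB : B = 0 := by linear_combination E2 - μ*hD
    have hCs : μ * (C * Real.sin (μ*π)) = 0 := by
      linear_combination -E4 + hB + μ*Real.cos (μ*π)*hD
    have hCc : C * (Real.cos (μ*π) - 1) = 0 := by
      linear_combination E3 - E1 - π*hB - Real.sin (μ*π)*hD
    have hC : C = 0 := by
      by_contra hC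
      have hs : Real.sin (μ*π) = 0 := by
        rcases mul_eq_zero.mp hCs with h | h
        · exact absurd h hμ0
        · exact (mul_eq_zero.mp h).resolve_left hC
      have hc : Real.cos (μ*π) = 1 := by
        have := (mul_eq_zero.mp hCc).resolve_left hC
        linarith
      exact hΔ (by rw [hs, hc]; ring)
    have hA : A = 0 := by linarith
    rw [hrw y0 hy0]
    simp [trigf, hA, hB, hC, hD]
  · intro hcond
    by_cases hs : Real.sin (μ*π) = 0
    · -- case sin = 0, cos = 1
      have hc1 : Real.cos (μ*π) = 1 := by
        rw [hs] at hcond; linarith [hcond]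
      obtain ⟨n, hn⟩ := (Real.cos_eq_one_iff (μ*π)).mp hc1
      have hμ2n : μ = 2*(n:ℝ) := by
        have : ((2:ℝ)*(n:ℝ)) * π = μ * π := by linarith [hn]
        exact (mul_right_cancel₀ hπ.ne' this).symm
      have hn1 : (1:ℝ) ≤ (n:ℝ) := by
        have h0 : (0:ℝ) < (n:ℝ) := by nlinarith
        have : (0:ℤ) < n := by exact_mod_cast h0
        exact_mod_cast this
      have hμ1 : (1:ℝ) ≤ μ := by nlinarith
      refine ⟨trigf (-1) 0 1 0 μ, trigf_contDiff _ _ _ _ _, ⟨π/μ, ⟨?_, ?_⟩, ?_⟩, ?_, ?_, ?_, ?_, ?_⟩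
      · positivity
      · calc π/μ ≤ π/1 := by gcongr
          _ = π := by ring
      · have hx : μ * (π/μ) = π := by field_simp
        simp [trigf, hx, Real.cos_pi]
      · intro y hy
        rw [trigf_deriv4, trigf_deriv2]
        simp only [trigf]
        rw [← hμ2]; ring
      · simp [trigf]
      · simp [trigf, hc1]
      · rw [trigf_deriv]
        simp [trigf]
      · rw [trigf_deriv]
        simp [trigf, hs]
    · -- case sin ≠ 0
      refine ⟨trigf (-(Real.cos (μ*π) - 1)) (-(μ*Real.sin (μ*π))) (Real.cos (μ*π) - 1)
          (Real.sin (μ*π)) μ, trigf_contDiff _ _ _ _ _, ?_, ?_, ?_, ?_, ?_, ?_⟩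
      · -- nontrivial
        by_contra hall
        push_neg at hall
        have hev : trigf (-(Real.cos (μ*π) - 1)) (-(μ*Real.sin (μ*π))) (Real.cos (μ*π) - 1)
            (Real.sin (μ*π)) μ =ᶠ[nhds (π/2)] (fun _ => (0:ℝ)) := by
          filter_upwards [Ioo_mem_nhds (a := (0:ℝ)) (b := π) (by positivity) (by linarith)] with z hz
          exact hall z ⟨hz.1.le, hz.2.le⟩
        have h2 : deriv^[2] (trigf (-(Real.cos (μ*π) - 1)) (-(μ*Real.sin (μ*π)))
            (Real.cos (μ*π) - 1) (Real.sin (μ*π)) μ) (π/2) = 0 := by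
          have h := (hev.deriv.deriv).eq_of_nhds
          simpa using h
        have h3 : deriv^[3] (trigf (-(Real.cos (μ*π) - 1)) (-(μ*Real.sin (μ*π)))
            (Real.cos (μ*π) - 1) (Real.sin (μ*π)) μ) (π/2) = 0 := by
          have h := (hev.deriv.deriv.deriv).eq_of_nhds
          simpa using h
        rw [trigf_deriv2] at h2
        rw [trigf_deriv3] at h3
        have h2' : 0 + 0*(π/2) + (-(μ^2*(Real.cos (μ*π) - 1)))*Real.cos (μ*(π/2))
            + (-(μ^2*Real.sin (μ*π)))*Real.sin (μ*(π/2)) = 0 := h2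
        have h3' : 0 + 0*(π/2) + (-(μ^3*Real.sin (μ*π)))*Real.cos (μ*(π/2))
            + (μ^3*(Real.cos (μ*π) - 1))*Real.sin (μ*(π/2)) = 0 := h3
        have p2 := Real.sin_sq_add_cos_sq (μ*(π/2))
        have key : μ^5 * Real.sin (μ*π) = 0 := by
          linear_combination (-(μ^3*Real.sin (μ*(π/2))))*h2' + (-(μ^2*Real.cos (μ*(π/2))))*h3'
            - μ^5*Real.sin (μ*π)*p2
        have := (mul_eq_zero.mp key).resolve_left (pow_ne_zero 5 hμ0)
        exact hs this
      · intro y hy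
        rw [trigf_deriv4, trigf_deriv2]
        simp only [trigf]
        rw [← hμ2]; ring
      · show -(Real.cos (μ*π) - 1) + (-(μ*Real.sin (μ*π)))*0 + (Real.cos (μ*π) - 1)*Real.cos (μ*0)
            + Real.sin (μ*π)*Real.sin (μ*0) = 0
        simp
      · show -(Real.cos (μ*π) - 1) + (-(μ*Real.sin (μ*π)))*π + (Real.cos (μ*π) - 1)*Real.cos (μ*π)
            + Real.sin (μ*π)*Real.sin (μ*π) = 0
        have p := Real.sin_sq_add_cos_sq (μ*π)
        linear_combination p - hcond
      · rw [trigf_deriv]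
        show -(μ*Real.sin (μ*π)) + 0*0 + (μ*Real.sin (μ*π))*Real.cos (μ*0)
            + (-(μ*(Real.cos (μ*π) - 1)))*Real.sin (μ*0) = 0
        simp
      · rw [trigf_deriv]
        show -(μ*Real.sin (μ*π)) + 0*π + (μ*Real.sin (μ*π))*Real.cos (μ*π)
            + (-(μ*(Real.cos (μ*π) - 1)))*Real.sin (μ*π) = 0
        ring
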